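/- Let t ∈ ℂ with t³ + 27 ≠ 0 and t(t³−216)(t⁶−1404t³−58320) generic (all roots of z³+tz+2 distinct and nonzero). The set of sextactic points of the Hesse cubic F = x³+y³+z³+txyz = 0, defined as the common zeros of F and (x³−y³)(x³−z³)(y³−z³) with xyz ≠ 0, consists of exactly 27 points in ℙ²(ℂ). -/

import Mathlib

open MvPolynomial

/-- The Hesse pencil cubic `F = x³ + y³ + z³ + t·x·y·z`. -/
noncomputable def hesseF (t : ℂ) : MvPolynomial (Fin 3) ℂ :=
  X 0 ^ 3 + X 1 ^ 3 + X 2 ^ 3 + C t * X 0 * X 1 * X 2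

/-- The second Hessian `(x³−y³)(x³−z³)(y³−z³)` of the Hesse cubic. -/
noncomputable def hesseG : MvPolynomial (Fin 3) ℂ :=
  (X 0 ^ 3 - X 1 ^ 3) * (X 0 ^ 3 - X 2 ^ 3) * (X 1 ^ 3 - X 2 ^ 3)

/-- The set of sextactic points of the Hesse cubic in `ℙ²(ℂ)`: common zeros of `F`
and `(x³−y³)(x³−z³)(y³−z³)` with `xyz ≠ 0`. -/
def hesseSextactic (t : ℂ) : Set (Projectivization ℂ (Fin 3 → ℂ)) :=
  {P | eval P.rep (hesseF t) = 0 ∧ eval P.rep hesseG = 0 ∧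
        P.rep 0 * P.rep 1 * P.rep 2 ≠ 0}

/-- For generic `t` (with `t³+27 ≠ 0` and all roots of `z³+tz+2` distinct and
nonzero), the Hesse cubic has exactly `27` sextactic points. -/
noncomputable def hesseEmb (p : ℂ × ℂ) : Projectivization ℂ (Fin 3 → ℂ) :=
  Projectivization.mk ℂ ![p.1, p.2, 1] (fun h => by simpa using congrFun h 2)

lemma hesseEmb_inj : Function.Injective hesseEmb := by
  intro p q h
  rw [hesseEmb, hesseEmb, Projectivization.mk_eq_mk_iff] at h
  obtain ⟨a, ha⟩ := h
  have h2 := congrFun ha 2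
  have h0 := congrFun ha 0
  have h1 := congrFun ha 1
  simp [Units.smul_def] at h0 h1 h2
  simp [h2] at h0 h1
  exact Prod.ext h0.symm h1.symm

lemma hesse_mem_iff (t : ℂ) (P : Projectivization ℂ (Fin 3 → ℂ)) :
    P ∈ hesseSextactic t ↔ ∃ a b : ℂ,
      (a^3 + b^3 + 1 + t*a*b = 0 ∧ (a^3-b^3)*(a^3-1)*(b^3-1) = 0 ∧ a ≠ 0 ∧ b ≠ 0) ∧
      P = hesseEmb (a, b) := by
  constructor
  · rintro ⟨hF, hG, hne⟩
    have h0 : P.rep 0 ≠ 0 := fun h => hne (by simp [h])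
    have h1 : P.rep 1 ≠ 0 := fun h => hne (by simp [h])
    have h2 : P.rep 2 ≠ 0 := fun h => hne (by simp [h])
    simp only [hesseF, map_add, map_mul, map_pow, eval_X, eval_C] at hF
    simp only [hesseG, map_mul, map_sub, map_pow, eval_X] at hG
    refine ⟨P.rep 0 / P.rep 2, P.rep 1 / P.rep 2, ⟨?_, ?_, ?_, ?_⟩, ?_⟩
    · field_simp
      linear_combination hF
    · field_simp
      linear_combination hG
    · exact div_ne_zero h0 h2
    · exact div_ne_zero h1 h2
    · rw [hesseEmb, ← Projectivization.mk_rep P, Projectivization.mk_eq_mk_iff]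
      refine ⟨Units.mk0 (P.rep 2) h2, ?_⟩
      funext i
      fin_cases i <;> simp [Units.smul_def] <;> field_simp
  · rintro ⟨a, b, ⟨hF, hG, ha, hb⟩, rfl⟩
    have hrep : Projectivization.mk ℂ _ (Projectivization.rep_nonzero (hesseEmb (a,b)))
        = Projectivization.mk ℂ ![a, b, 1] (fun h => by simpa using congrFun h 2) := by
      rw [Projectivization.mk_rep]; rfl
    rw [Projectivization.mk_eq_mk_iff] at hrep
    obtain ⟨c, hc⟩ := hrep
    have e0 := congrFun hc 0
    have e1 := congrFun hc 1
    have e2 := congrFun hc 2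
    simp [Units.smul_def] at e0 e1 e2
    have hcne : (c : ℂ) ≠ 0 := c.ne_zero
    refine ⟨?_, ?_, ?_⟩
    · simp only [hesseF, Set.mem_setOf_eq, map_add, map_mul, map_pow, eval_X, eval_C]
      rw [← e0, ← e1, ← e2]
      linear_combination (c:ℂ)^3 * hF
    · simp only [hesseG, map_mul, map_sub, map_pow, eval_X]
      rw [← e0, ← e1, ← e2]
      linear_combination (c:ℂ)^9 * hG
    · rw [← e0, ← e1, ← e2]
      simp [hcne, ha, hb]

noncomputable def hesseParam (q : Fin 3 × ℂ × ℂ) : ℂ × ℂ :=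
  ![(q.2.1, q.2.1^2*q.2.2), (q.2.1^2*q.2.2, q.2.1), (q.2.1/q.2.2, q.2.1^2/q.2.2)] q.1

theorem hesse_27_sextactic_points (t : ℂ) (ht : t ^ 3 + 27 ≠ 0)
    (hgen : ∃ z₁ z₂ z₃ : ℂ, z₁ ≠ z₂ ∧ z₁ ≠ z₃ ∧ z₂ ≠ z₃ ∧
      z₁ ≠ 0 ∧ z₂ ≠ 0 ∧ z₃ ≠ 0 ∧
      ∀ w : ℂ, w ^ 3 + t * w + 2 = 0 ↔ (w = z₁ ∨ w = z₂ ∨ w = z₃)) :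
    (hesseSextactic t).ncard = 27 := by
  obtain ⟨z₁, z₂, z₃, h12, h13, h23, hz1, hz2, hz3, hroot⟩ := hgen
  set R : Finset ℂ := {z₁, z₂, z₃} with hRdef
  set M : Finset ℂ := Polynomial.nthRootsFinset 3 (1 : ℂ) with hMdef
  set Par : Finset (Fin 3 × ℂ × ℂ) := Finset.univ ×ˢ M ×ˢ R with hPardef
  have hMiff : ∀ ζ : ℂ, ζ ∈ M ↔ ζ ^ 3 = 1 := fun ζ =>
    Polynomial.mem_nthRootsFinset (n := 3) (by norm_num) (1 : ℂ)
  have hRiff : ∀ c : ℂ, c ∈ R ↔ c ^ 3 + t * c + 2 = 0 := by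
    intro c
    rw [hroot c]
    simp [hRdef]
  have hRne : ∀ c : ℂ, c ∈ R → c ≠ 0 := by
    intro c hc
    rcases Finset.mem_insert.1 hc with h | h
    · exact h ▸ hz1
    rcases Finset.mem_insert.1 h with h | h
    · exact h ▸ hz2
    · exact (Finset.mem_singleton.1 h) ▸ hz3
  have hMne : ∀ ζ : ℂ, ζ ^ 3 = 1 → ζ ≠ 0 := by
    intro ζ hζ h; rw [h] at hζ; norm_num at hζ
  have hParMem : ∀ p : Fin 3 × ℂ × ℂ, p ∈ (↑Par : Set (Fin 3 × ℂ × ℂ)) ↔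
      p.2.1 ∈ M ∧ p.2.2 ∈ R := by
    intro p
    rw [Finset.mem_coe, hPardef]
    simp [Finset.mem_product]
  have hkey : ∀ a b : ℂ, a^3+b^3+1+t*a*b = 0 → a^3 = 1 → b^3 = 1 → False := by
    intro a b e1 e2 e3
    apply ht
    have htab : t*a*b = -3 := by linear_combination e1 - e2 - e3
    linear_combination ((t*a*b)^2 - 3*(t*a*b) + 9) * htab - t^3*b^3 * e2 - t^3 * e3
  have hFam0 : ∀ ζ c : ℂ, ζ^3 = 1 → c^3 + t*c + 2 = 0 →
      ζ^3 + (ζ^2*c)^3 + 1 + t*ζ*(ζ^2*c) = 0 := by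
    intro ζ c h1 h2
    linear_combination h2 + (1 + t*c + c^3*(ζ^3+1)) * h1
  have hFam1 : ∀ ζ c : ℂ, ζ^3 = 1 → c^3 + t*c + 2 = 0 →
      (ζ^2*c)^3 + ζ^3 + 1 + t*(ζ^2*c)*ζ = 0 := by
    intro ζ c h1 h2
    linear_combination h2 + (1 + t*c + c^3*(ζ^3+1)) * h1
  have hFam2 : ∀ ζ c : ℂ, c ≠ 0 → ζ^3 = 1 → c^3 + t*c + 2 = 0 →
      (ζ/c)^3 + (ζ^2/c)^3 + 1 + t*(ζ/c)*(ζ^2/c) = 0 := by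
    intro ζ c hc h1 h2
    field_simp
    linear_combination h2 + (ζ^3+2+t*c)*h1
  -- the set equality
  have hset : hesseSextactic t = (hesseEmb ∘ hesseParam) '' ↑Par := by
    ext P
    rw [hesse_mem_iff]
    constructor
    · rintro ⟨a, b, ⟨hF, hG, ha, hb⟩, rfl⟩
      rcases mul_eq_zero.1 hG with h | h
      · rcases mul_eq_zero.1 h with h | h
        · -- a³ = b³ : family 2, ζ = b/a, c = b/a²
          refine ⟨(2, b/a, b/a^2), ?_, ?_⟩
          · rw [hParMem]
            constructor
            · rw [hMiff, div_pow, div_eq_one_iff_eq (pow_ne_zero 3 ha)]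
              linear_combination -h
            · rw [hRiff]
              have hdiv : (b/a^2)^3 + t*(b/a^2) + 2 = (b^3 + t*a^4*b + 2*a^6)/a^6 := by
                field_simp
              have hnum : b^3 + t*a^4*b + 2*a^6 = 0 := by
                linear_combination a^3*hF + (a^3-1)*h
              rw [hdiv, hnum, zero_div]
          · apply congrArg hesseEmb
            simp only [hesseParam, Matrix.cons_val_two, Matrix.tail_cons, Matrix.head_cons]
            refine Prod.ext ?_ ?_ <;> field_simp <;> ring
        · -- a³ = 1 : family 0, ζ = a, c = a*b
          refine ⟨(0, a, a*b), ?_, ?_⟩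
          · rw [hParMem]
            constructor
            · rw [hMiff]; linear_combination h
            · rw [hRiff]; linear_combination hF + (b^3 - 1) * h
          · apply congrArg hesseEmb
            simp only [hesseParam, Matrix.cons_val_zero]
            exact Prod.ext rfl (by linear_combination b * h)
      · -- b³ = 1 : family 1, ζ = b, c = a*b
        refine ⟨(1, b, a*b), ?_, ?_⟩
        · rw [hParMem]
          constructor
          · rw [hMiff]; linear_combination h
          · rw [hRiff]; linear_combination hF + (a^3 - 1) * h
        · apply congrArg hesseEmb
          simp only [hesseParam, Matrix.cons_val_one, Matrix.head_cons, Matrix.cons_val_zero]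
          exact Prod.ext (by linear_combination a * h) rfl
    · rintro ⟨⟨i, ζ, c⟩, hmem, rfl⟩
      obtain ⟨hζM, hcR⟩ := (hParMem _).1 hmem
      have hζ : ζ ^ 3 = 1 := (hMiff ζ).1 hζM
      have hc : c ^ 3 + t * c + 2 = 0 := (hRiff c).1 hcR
      have hζ0 : ζ ≠ 0 := hMne ζ hζ
      have hc0 : c ≠ 0 := hRne c hcR
      fin_cases i
      · exact ⟨ζ, ζ^2*c, ⟨hFam0 ζ c hζ hc,
          by linear_combination ((ζ^3-(ζ^2*c)^3) * ((ζ^2*c)^3-1)) * hζ,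
          hζ0, mul_ne_zero (pow_ne_zero 2 hζ0) hc0⟩,
          by simp only [Function.comp_apply, hesseParam, Fin.zero_eta,
            Matrix.cons_val_zero]⟩
      · exact ⟨ζ^2*c, ζ, ⟨hFam1 ζ c hζ hc,
          by linear_combination (((ζ^2*c)^3-ζ^3) * (((ζ^2*c)^3-1))) * hζ,
          mul_ne_zero (pow_ne_zero 2 hζ0) hc0, hζ0⟩,
          by simp only [Function.comp_apply, hesseParam, Fin.mk_one,
            Matrix.cons_val_one, Matrix.head_cons, Matrix.cons_val_zero]⟩
      · refine ⟨ζ/c, ζ^2/c, ⟨hFam2 ζ c hc0 hζ hc, ?_,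
          div_ne_zero hζ0 hc0, div_ne_zero (pow_ne_zero 2 hζ0) hc0⟩,
          by simp only [Function.comp_apply, hesseParam,
            show (⟨2, by norm_num⟩ : Fin 3) = 2 from rfl,
            Matrix.cons_val_two, Matrix.tail_cons, Matrix.head_cons]⟩
        have h30 : (ζ/c)^3 - (ζ^2/c)^3 = 0 := by
          field_simp
          linear_combination (-(ζ^3)) * hζ
        rw [h30, zero_mul, zero_mul]
  -- injectivity on the parameter set
  have hinj : Set.InjOn (hesseEmb ∘ hesseParam) ↑Par := by
    rintro ⟨i, ζ, c⟩ hq ⟨i', ζ', c'⟩ hq' hEq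
    have h : hesseParam (i, ζ, c) = hesseParam (i', ζ', c') := hesseEmb_inj hEq
    obtain ⟨hζM, hcR⟩ := (hParMem _).1 hq
    obtain ⟨hζM', hcR'⟩ := (hParMem _).1 hq'
    have hζ : ζ ^ 3 = 1 := (hMiff ζ).1 hζM
    have hc : c ^ 3 + t * c + 2 = 0 := (hRiff c).1 hcR
    have hζ0 : ζ ≠ 0 := hMne ζ hζ
    have hc0 : c ≠ 0 := hRne c hcR
    have hζ' : ζ' ^ 3 = 1 := (hMiff ζ').1 hζM'
    have hc' : c' ^ 3 + t * c' + 2 = 0 := (hRiff c').1 hcR'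
    have hζ0' : ζ' ≠ 0 := hMne ζ' hζ'
    have hc0' : c' ≠ 0 := hRne c' hcR'
    fin_cases i <;> fin_cases i' <;>
      simp only [hesseParam, Fin.zero_eta, Fin.mk_one,
        show (⟨2, by norm_num⟩ : Fin 3) = 2 from rfl,
        Matrix.cons_val_zero, Matrix.cons_val_one, Matrix.head_cons,
        Matrix.cons_val_two, Matrix.tail_cons, Prod.mk.injEq] at h ⊢
    -- (0,0)
    · obtain ⟨h1, h2⟩ := h
      subst h1
      exact ⟨trivial, rfl, mul_left_cancel₀ (pow_ne_zero 2 hζ0) h2⟩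
    -- (0,1)
    · obtain ⟨h1, h2⟩ := h
      have hb3 : (ζ^2*c)^3 = 1 := by rw [h2]; exact hζ'
      exact (hkey ζ (ζ^2*c) (hFam0 ζ c hζ hc) hζ hb3).elim
    -- (0,2)
    · obtain ⟨h1, h2⟩ := h
      rw [eq_div_iff hc0'] at h1
      have h1c : (ζ*c')^3 = ζ'^3 := by rw [h1]
      have hcc : c'^3 = 1 := by linear_combination h1c - c'^3*hζ + hζ'
      have hb3 : (ζ^2*c)^3 = 1 := by
        rw [h2, div_pow, hcc, div_one]
        linear_combination (ζ'^3+1)*hζ'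
      exact (hkey ζ (ζ^2*c) (hFam0 ζ c hζ hc) hζ hb3).elim
    -- (1,0)
    · obtain ⟨h1, h2⟩ := h
      have ha3 : (ζ^2*c)^3 = 1 := by rw [h1]; exact hζ'
      exact (hkey (ζ^2*c) ζ (hFam1 ζ c hζ hc) ha3 hζ).elim
    -- (1,1)
    · obtain ⟨h1, h2⟩ := h
      subst h2
      exact ⟨trivial, rfl, mul_left_cancel₀ (pow_ne_zero 2 hζ0) h1⟩
    -- (1,2)
    · obtain ⟨h1, h2⟩ := h
      rw [eq_div_iff hc0'] at h2
      have h2c : (ζ*c')^3 = (ζ'^2)^3 := by rw [h2]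
      have hcc : c'^3 = 1 := by linear_combination h2c - c'^3*hζ + (ζ'^3+1)*hζ'
      have ha3 : (ζ^2*c)^3 = 1 := by
        rw [h1, div_pow, hcc, div_one]
        exact hζ'
      exact (hkey (ζ^2*c) ζ (hFam1 ζ c hζ hc) ha3 hζ).elim
    -- (2,0)
    · obtain ⟨h1, h2⟩ := h
      rw [div_eq_iff hc0] at h1
      have h1c : ζ^3 = (ζ'*c)^3 := by rw [h1]
      have hcc : c^3 = 1 := by linear_combination hζ - h1c - c^3*hζ'
      have hb3 : (ζ'^2*c')^3 = 1 := by
        rw [← h2, div_pow, hcc, div_one]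
        linear_combination (ζ^3+1)*hζ
      exact (hkey ζ' (ζ'^2*c') (hFam0 ζ' c' hζ' hc') hζ' hb3).elim
    -- (2,1)
    · obtain ⟨h1, h2⟩ := h
      rw [div_eq_iff hc0] at h2
      have h2c : (ζ^2)^3 = (ζ'*c)^3 := by rw [h2]
      have hcc : c^3 = 1 := by linear_combination (ζ^3+1)*hζ - h2c - c^3*hζ'
      have ha3 : (ζ'^2*c')^3 = 1 := by
        rw [← h1, div_pow, hcc, div_one]
        exact hζ
      exact (hkey (ζ'^2*c') ζ' (hFam1 ζ' c' hζ' hc') ha3 hζ').elim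
    -- (2,2)
    · obtain ⟨h1, h2⟩ := h
      rw [div_eq_div_iff hc0 hc0'] at h1 h2
      have h3 : (ζ - ζ') * (ζ' * c) = 0 := by linear_combination h2 - ζ * h1
      have hzz : ζ = ζ' := by
        rcases mul_eq_zero.1 h3 with h4 | h4
        · exact sub_eq_zero.1 h4
        · exact absurd h4 (mul_ne_zero hζ0' hc0)
      subst hzz
      exact ⟨trivial, rfl, (mul_left_cancel₀ hζ0 h1).symm⟩
  rw [hset, Set.ncard_image_of_injOn hinj, Set.ncard_coe_finset, hPardef,
    Finset.card_product, Finset.card_product, hMdef,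
    (Complex.isPrimitiveRoot_exp 3 three_ne_zero).card_nthRootsFinset, hRdef]
  rw [Finset.card_insert_of_notMem (by simp [h12, h13]),
    Finset.card_insert_of_notMem (by simp [h23]), Finset.card_singleton]
  norm_num
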